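/- If the discount factor satisfies γ ∈ (0,1), then the model-free soft Bellman operator T̄ is a γ-contraction in the maximum norm, ‖T̄Λ − T̄Λ'‖_∞ ≤ γ ‖Λ − Λ'‖_∞ for all Λ, Λ' : S×A → ℝ, and consequently T̄ has a unique fixed point Λ̄*_β : S×A → ℝ satisfying Λ̄*_β = T̄Λ̄*_β. -/

import Mathlib

/-- The model-free soft Bellman operator
`[T̄Λ](s,a) = Σ_{s'} p(s'|s,a)(c(s,a,s') − (γ²/β) log Σ_{a'} exp(−(β/γ)Λ(s',a')))`. -/
noncomputable def barBellman {S A : Type*} [Fintype S] [Fintype A]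
    (p : S → A → S → ℝ) (c : S → A → S → ℝ) (β γ : ℝ)
    (Λ : S → A → ℝ) : S → A → ℝ :=
  fun s a =>
    ∑ s', p s a s' *
      (c s a s' - (γ ^ 2 / β) * Real.log (∑ a', Real.exp (-(β / γ) * Λ s' a')))

/-- Maximum norm `‖X‖_∞ = max_{s,a} |X(s,a)|`. -/
noncomputable def maxnorm {S A : Type*} [Fintype S] [Fintype A] [Nonempty S] [Nonempty A]
    (X : S → A → ℝ) : ℝ :=
  Finset.univ.sup' Finset.univ_nonempty (fun sa : S × A => |X sa.1 sa.2|)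

lemma logsum_le_aux {A : Type*} [Fintype A] [Nonempty A] (t : ℝ) (ht : 0 < t)
    (f g : A → ℝ) (m : ℝ) (hm : ∀ a, g a - f a ≤ m) :
    Real.log (∑ a, Real.exp (-t * f a)) ≤ Real.log (∑ a, Real.exp (-t * g a)) + t * m := by
  have hpos : (0:ℝ) < ∑ a, Real.exp (-t * g a) :=
    Finset.sum_pos (fun a _ => Real.exp_pos _) Finset.univ_nonempty
  have h1 : (∑ a, Real.exp (-t * f a)) ≤ Real.exp (t * m) * ∑ a, Real.exp (-t * g a) := by
    rw [Finset.mul_sum]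
    apply Finset.sum_le_sum
    intro a _
    rw [← Real.exp_add]
    apply Real.exp_le_exp.mpr
    have := hm a
    nlinarith [hm a]
  calc Real.log (∑ a, Real.exp (-t * f a))
      ≤ Real.log (Real.exp (t * m) * ∑ a, Real.exp (-t * g a)) := by
        apply Real.log_le_log (Finset.sum_pos (fun a _ => Real.exp_pos _) Finset.univ_nonempty) h1
    _ = Real.log (∑ a, Real.exp (-t * g a)) + t * m := by
        rw [Real.log_mul (Real.exp_ne_zero _) (ne_of_gt hpos), Real.log_exp]; ring

lemma logsum_lip {A : Type*} [Fintype A] [Nonempty A] (t : ℝ) (ht : 0 < t)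
    (f g : A → ℝ) (m : ℝ) (hm : ∀ a, |f a - g a| ≤ m) :
    |Real.log (∑ a, Real.exp (-t * f a)) - Real.log (∑ a, Real.exp (-t * g a))| ≤ t * m := by
  rw [abs_sub_le_iff]
  constructor
  · have := logsum_le_aux t ht f g m (fun a => by have := abs_le.mp (hm a); linarith [this.1])
    linarith
  · have := logsum_le_aux t ht g f m (fun a => by have := abs_le.mp (hm a); linarith [this.2])
    linarith


/-- For discount factor `γ ∈ (0,1)`, the model-free soft Bellman operator `T̄` is a
`γ`-contraction in the maximum norm and hence possesses a unique fixed point. -/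
theorem barBellman_contraction_and_unique_fixedPoint
    {S A : Type*} [Fintype S] [Fintype A] [Nonempty S] [Nonempty A]
    (p : S → A → S → ℝ) (c : S → A → S → ℝ) (β γ : ℝ)
    (hp0 : ∀ s a s', 0 ≤ p s a s') (hp1 : ∀ s a, ∑ s', p s a s' = 1)
    (hβ : 0 < β) (hγ0 : 0 < γ) (hγ1 : γ < 1) :
    (∀ Λ Λ' : S → A → ℝ,
      maxnorm (fun s a => barBellman p c β γ Λ s a - barBellman p c β γ Λ' s a) ≤
        γ * maxnorm (fun s a => Λ s a - Λ' s a)) ∧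
    (∃! Λstar : S → A → ℝ, barBellman p c β γ Λstar = Λstar) := by
  -- pointwise contraction
  have key : ∀ Λ Λ' : S → A → ℝ, ∀ s a,
      |barBellman p c β γ Λ s a - barBellman p c β γ Λ' s a| ≤
        γ * maxnorm (fun s a => Λ s a - Λ' s a) := by
    intro Λ Λ' s a
    set m := maxnorm (fun s a => Λ s a - Λ' s a) with hm
    have hmem : ∀ s' a', |Λ s' a' - Λ' s' a'| ≤ m := by
      intro s' a'
      exact Finset.le_sup' (fun sa : S × A => |Λ sa.1 sa.2 - Λ' sa.1 sa.2|)
        (Finset.mem_univ (s', a'))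
    have hlog : ∀ s', |Real.log (∑ a', Real.exp (-(β / γ) * Λ s' a')) -
        Real.log (∑ a', Real.exp (-(β / γ) * Λ' s' a'))| ≤ (β / γ) * m := by
      intro s'
      exact logsum_lip (β / γ) (div_pos hβ hγ0) _ _ m (fun a' => hmem s' a')
    have hdiff : barBellman p c β γ Λ s a - barBellman p c β γ Λ' s a =
        ∑ s', p s a s' * ((γ ^ 2 / β) *
          (Real.log (∑ a', Real.exp (-(β / γ) * Λ' s' a')) -
           Real.log (∑ a', Real.exp (-(β / γ) * Λ s' a')))) := by
      unfold barBellman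
      rw [← Finset.sum_sub_distrib]
      apply Finset.sum_congr rfl
      intro s' _
      ring
    rw [hdiff]
    calc |∑ s', p s a s' * ((γ ^ 2 / β) *
          (Real.log (∑ a', Real.exp (-(β / γ) * Λ' s' a')) -
           Real.log (∑ a', Real.exp (-(β / γ) * Λ s' a'))))|
        ≤ ∑ s', |p s a s' * ((γ ^ 2 / β) *
          (Real.log (∑ a', Real.exp (-(β / γ) * Λ' s' a')) -
           Real.log (∑ a', Real.exp (-(β / γ) * Λ s' a'))))| :=
          Finset.abs_sum_le_sum_abs _ _
      _ ≤ ∑ s', p s a s' * (γ * m) := by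
          apply Finset.sum_le_sum
          intro s' _
          rw [abs_mul, abs_of_nonneg (hp0 s a s'), abs_mul,
            abs_of_nonneg (by positivity : (0:ℝ) ≤ γ ^ 2 / β)]
          apply mul_le_mul_of_nonneg_left _ (hp0 s a s')
          have h := hlog s'
          rw [abs_sub_comm] at h
          calc (γ ^ 2 / β) * |Real.log (∑ a', Real.exp (-(β / γ) * Λ' s' a')) -
                Real.log (∑ a', Real.exp (-(β / γ) * Λ s' a'))|
              ≤ (γ ^ 2 / β) * ((β / γ) * m) :=
                mul_le_mul_of_nonneg_left h (by positivity)
            _ = γ * m := by field_simp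
      _ = γ * m := by rw [← Finset.sum_mul, hp1 s a, one_mul]
  have mnonneg : ∀ X : S → A → ℝ, 0 ≤ maxnorm X := by
    intro X
    obtain ⟨s⟩ := ‹Nonempty S›; obtain ⟨a⟩ := ‹Nonempty A›
    exact le_trans (abs_nonneg _)
      (Finset.le_sup' (fun sa : S × A => |X sa.1 sa.2|) (Finset.mem_univ (s, a)))
  have contr : ∀ Λ Λ' : S → A → ℝ,
      maxnorm (fun s a => barBellman p c β γ Λ s a - barBellman p c β γ Λ' s a) ≤
        γ * maxnorm (fun s a => Λ s a - Λ' s a) := by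
    intro Λ Λ'
    apply Finset.sup'_le
    intro sa _
    exact key Λ Λ' sa.1 sa.2
  refine ⟨contr, ?_⟩
  -- Banach fixed point via ContractingWith on the pi-pi metric space
  have hmaxle : ∀ Λ Λ' : S → A → ℝ, maxnorm (fun s a => Λ s a - Λ' s a) ≤ dist Λ Λ' := by
    intro Λ Λ'
    apply Finset.sup'_le
    intro sa _
    have h1 : dist (Λ sa.1) (Λ' sa.1) ≤ dist Λ Λ' := dist_le_pi_dist Λ Λ' sa.1
    have h2 : dist (Λ sa.1 sa.2) (Λ' sa.1 sa.2) ≤ dist (Λ sa.1) (Λ' sa.1) :=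
      dist_le_pi_dist (Λ sa.1) (Λ' sa.1) sa.2
    rw [Real.dist_eq] at h2
    exact le_trans (le_trans h2 h1) (le_refl _)
  have hdistle : ∀ Λ Λ' : S → A → ℝ,
      dist (barBellman p c β γ Λ) (barBellman p c β γ Λ') ≤ γ * dist Λ Λ' := by
    intro Λ Λ'
    have hγd : 0 ≤ γ * dist Λ Λ' := mul_nonneg hγ0.le dist_nonneg
    rw [dist_pi_le_iff hγd]
    intro s
    rw [dist_pi_le_iff hγd]
    intro a
    rw [Real.dist_eq]
    calc |barBellman p c β γ Λ s a - barBellman p c β γ Λ' s a|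
        ≤ γ * maxnorm (fun s a => Λ s a - Λ' s a) := key Λ Λ' s a
      _ ≤ γ * dist Λ Λ' := mul_le_mul_of_nonneg_left (hmaxle Λ Λ') hγ0.le
  set K : NNReal := ⟨γ, hγ0.le⟩ with hK
  have hlip : LipschitzWith K (barBellman p c β γ) :=
    LipschitzWith.of_dist_le_mul (fun Λ Λ' => hdistle Λ Λ')
  have hcw : ContractingWith K (barBellman p c β γ) := by
    refine ⟨?_, hlip⟩
    rw [← NNReal.coe_lt_coe]
    exact hγ1
  obtain ⟨Λstar, hfix⟩ := hcw.exists_fixedPoint (fun _ _ => (0:ℝ)) (edist_ne_top _ _)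
  refine ⟨Λstar, hfix.1, ?_⟩
  intro y hy
  exact hcw.fixedPoint_unique' (x := y) (y := Λstar) hy hfix.1
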